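/- For each dyadic δ-tube T and each dyadic Δ with 30δ < Δ, one has (6T)^{(Δ)} ∩ [−1,2)² ⊂ 6(T^Δ). Here (6T)^{(Δ)} is the Δ-neighborhood of the 6δ-neighborhood of T, and T^Δ is the dyadic Δ-tube containing T. -/
import Mathlib


open Set Metric
open scoped Classical

noncomputable section

/-- The half-open dyadic square of side-length `δ` with index `q`. -/
def dSq (δ : ℝ) (q : ℤ × ℤ) : Set (ℝ × ℝ) :=
  Set.Ico ((q.1 : ℝ) * δ) (((q.1 : ℝ) + 1) * δ) ×ˢ Set.Ico ((q.2 : ℝ) * δ) (((q.2 : ℝ) + 1) * δ)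

/-- The dyadic `δ`-covering number of a planar set. -/
def covNum (δ : ℝ) (P : Set (ℝ × ℝ)) : ℕ :=
  Nat.card {q : ℤ × ℤ | (dSq δ q ∩ P).Nonempty}

/-- The dyadic `δ`-covering number of a set of reals. -/
def covNum1 (δ : ℝ) (A : Set ℝ) : ℕ :=
  Nat.card {k : ℤ | (Set.Ico ((k : ℝ) * δ) (((k : ℝ) + 1) * δ) ∩ A).Nonempty}

/-- `A` is a `(δ, s, C)`-set in the plane. -/
def IsDSSet (δ s C : ℝ) (A : Set (ℝ × ℝ)) : Prop :=
  ∀ (x : ℝ × ℝ) (r : ℝ), δ ≤ r → r ≤ 1 →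
    (covNum δ (A ∩ Metric.ball x r) : ℝ) ≤ C * r ^ s * (covNum δ A : ℝ)

/-- The line `y = a x + b`, dual to the point `(a, b)`. -/
def dualLine (a b : ℝ) : Set (ℝ × ℝ) := {z : ℝ × ℝ | z.2 = a * z.1 + b}

/-- The dyadic `δ`-tube `D(p)`, the union of the lines dual to points of the
dyadic `δ`-square with index `q`. -/
def dTube (δ : ℝ) (q : ℤ × ℤ) : Set (ℝ × ℝ) :=
  {z : ℝ × ℝ | ∃ ab ∈ dSq δ q, z.2 = ab.1 * z.1 + ab.2}

/-- The dyadic square with index `q` is contained in `[0,1)²`. -/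
def sqInUnit (δ : ℝ) (q : ℤ × ℤ) : Prop :=
  dSq δ q ⊆ Set.Ico (0 : ℝ) 1 ×ˢ Set.Ico (0 : ℝ) 1

/-- The dyadic `δ`-square with index `q` is contained in `[−1,1] × ℝ`, so that
`dTube δ q` is a legitimate dyadic `δ`-tube. -/
def tubeIdx (δ : ℝ) (q : ℤ × ℤ) : Prop :=
  (-1 : ℝ) ≤ (q.1 : ℝ) * δ ∧ ((q.1 : ℝ) + 1) * δ ≤ 1

/-- Index of the dyadic parent square/tube, when the scale is multiplied by `S`. -/
def parQ (S : ℤ) (q : ℤ × ℤ) : ℤ × ℤ := (Int.fdiv q.1 S, Int.fdiv q.2 S)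

/-- The `c·ρ`-neighbourhood of the dyadic `ρ`-tube with index `q`; `c = 6` gives `6T`
and `c = 4` gives `4T`. -/
def nbTube (c ρ : ℝ) (q : ℤ × ℤ) : Set (ℝ × ℝ) :=
  Metric.cthickening (c * ρ) (dTube ρ q)

/-- The union of the dyadic `δ`-squares indexed by a finite set. -/
def sqUnion (δ : ℝ) (P : Finset (ℤ × ℤ)) : Set (ℝ × ℝ) := ⋃ p ∈ P, dSq δ p

/-- `(𝒫, 𝒯)` is a `(δ, s, C, M)`-nice configuration: every `p ∈ 𝒫` carries a
`(δ, s, C)`-set `𝒯(p) ⊆ 𝒯` of tubes meeting `p`, with `|𝒯(p)| ∼ M`. -/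
def NiceConfig (δ s C : ℝ) (M : ℕ) (P T : Finset (ℤ × ℤ))
    (Tp : ℤ × ℤ → Finset (ℤ × ℤ)) : Prop :=
  (∀ p ∈ P, sqInUnit δ p) ∧ (∀ t ∈ T, tubeIdx δ t) ∧
  ∀ p ∈ P, Tp p ⊆ T ∧ IsDSSet δ s C (sqUnion δ (Tp p)) ∧
    (M : ℝ) ≤ 2 * ((Tp p).card : ℝ) ∧ ((Tp p).card : ℝ) ≤ 2 * (M : ℝ) ∧
    ∀ t ∈ Tp p, (dTube δ t ∩ dSq δ p).Nonempty



/-- **Thickening lemma for dyadic tubes.** For a dyadic `δ`-tube `T` and a dyadic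
scale `Δ > 30 δ`, the `Δ`-neighbourhood of `6T` intersected with `[−1,2)²` is
contained in `6(T^Δ)`, where `T^Δ` is the dyadic `Δ`-tube containing `T`. -/
lemma ico_sub (δ Δ : ℝ) (S k : ℤ) (hS : 0 < S) (hδ : 0 < δ) (hΔ : Δ = (S:ℝ) * δ) :
    Set.Ico ((k : ℝ) * δ) (((k : ℝ) + 1) * δ) ⊆
    Set.Ico (((Int.fdiv k S) : ℝ) * Δ) (((Int.fdiv k S : ℝ) + 1) * Δ) := by
  have hfd : Int.fdiv k S = k / S := Int.fdiv_eq_ediv_of_nonneg _ hS.le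
  have h1 : (k / S) * S ≤ k := Int.ediv_mul_le k (by omega)
  have h2 : k < (k / S + 1) * S := Int.lt_ediv_add_one_mul_self k hS
  apply Set.Ico_subset_Ico
  · rw [hfd, hΔ]
    have : ((k / S : ℤ) : ℝ) * S ≤ (k : ℝ) := by exact_mod_cast Int.cast_le.mpr h1
    nlinarith
  · rw [hfd, hΔ]
    have : (k : ℝ) + 1 ≤ ((k / S : ℤ) + 1 : ℤ) * S := by exact_mod_cast h2
    push_cast at this
    nlinarith

theorem thicken_dyadic_tube (n m : ℕ) (δ Δ : ℝ)
    (hδ : δ = 2 ^ (-(n : ℤ))) (hΔ : Δ = 2 ^ (-(m : ℤ)))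
    (h : 30 * δ < Δ) (q : ℤ × ℤ) (hq : tubeIdx δ q) :
    Metric.cthickening Δ (nbTube 6 δ q) ∩
        (Set.Ico (-1 : ℝ) 2 ×ˢ Set.Ico (-1 : ℝ) 2)
      ⊆ nbTube 6 Δ (parQ ((2 : ℤ) ^ (n - m)) q) := by
  have hδ0 : (0:ℝ) < δ := by rw [hδ]; positivity
  have hΔ0 : (0:ℝ) < Δ := by rw [hΔ]; positivity
  have hmn : m < n := by
    by_contra hc
    push_neg at hc
    have : Δ ≤ δ := by
      rw [hδ, hΔ]
      apply zpow_le_zpow_right₀ (by norm_num)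
      omega
    nlinarith
  set S : ℤ := (2:ℤ) ^ (n - m) with hSdef
  have hS : 0 < S := by positivity
  have hSΔ : Δ = (S : ℝ) * δ := by
    rw [hδ, hΔ, hSdef]
    push_cast
    rw [← zpow_natCast (2:ℝ) (n - m), ← zpow_add₀ (by norm_num : (2:ℝ) ≠ 0)]
    congr 1
    omega
  have hsq : dSq δ q ⊆ dSq Δ (parQ S q) := fun z hz =>
    ⟨ico_sub δ Δ S q.1 hS hδ0 hSΔ hz.1, ico_sub δ Δ S q.2 hS hδ0 hSΔ hz.2⟩
  have htube : dTube δ q ⊆ dTube Δ (parQ S q) := fun z ⟨ab, hab, he⟩ =>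
    ⟨ab, hsq hab, he⟩
  intro z hz
  have hz1 := hz.1
  have h1 : Metric.cthickening Δ (nbTube 6 δ q) ⊆
      Metric.cthickening (Δ + 6 * δ) (dTube δ q) := by
    unfold nbTube
    exact Metric.cthickening_cthickening_subset hΔ0.le (by positivity) _
  have h2 : Δ + 6 * δ ≤ 6 * Δ := by nlinarith
  exact Metric.cthickening_subset_of_subset _ htube
    (Metric.cthickening_mono h2 _ (h1 hz1))


end
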